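/- For every integer n ≥ 1 and real r > 1, ((1/n)∑_{i=1}^n i^r / ((1/(n+1))∑_{i=1}^{n+1} i^r))^{1/r} ≤ (n+1)/(n+2), with the reverse inequality for 0 < r < 1. -/

import Mathlib

open Finset Real

lemma bi_sum_shift (n : ℕ) (g : ℕ → ℝ) :
    ∑ i ∈ range n, (((n:ℝ) - i) * g (1+i) + ((i:ℝ)+1) * g (2+i))
      = n * ∑ i ∈ range (n+1), g (1+i) := by
  rw [Finset.sum_add_distrib]
  have h2 : ∑ i ∈ range n, ((i:ℝ)+1) * g (2+i)
      = ∑ i ∈ range (n+1), (i:ℝ) * g (1+i) := by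
    rw [Finset.sum_range_succ' (fun i => (i:ℝ) * g (1+i)) n]
    simp only [Nat.cast_zero, zero_mul, add_zero]
    refine Finset.sum_congr rfl fun i _ => ?_
    rw [show 1+(i+1)=2+i from by omega]
    push_cast; ring
  rw [h2]
  have h1 : ∑ i ∈ range n, ((n:ℝ) - i) * g (1+i)
      = ∑ i ∈ range (n+1), ((n:ℝ) - i) * g (1+i) := by
    rw [Finset.sum_range_succ]; simp
  rw [h1, ← Finset.sum_add_distrib, Finset.mul_sum]
  exact Finset.sum_congr rfl fun i _ => by ring

lemma bi_key (n : ℕ) {f : ℝ → ℝ} (hf : ConvexOn ℝ (Set.Ici 0) f) :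
    ((n:ℝ)+1) * ∑ i ∈ Finset.Icc 1 n, f ((i:ℝ)/((n:ℝ)+1))
      ≤ (n:ℝ) * ∑ i ∈ Finset.Icc 1 (n+1), f ((i:ℝ)/((n:ℝ)+2)) := by
  have hn1 : (0:ℝ) < (n:ℝ)+1 := by positivity
  have hn2 : (0:ℝ) < (n:ℝ)+2 := by positivity
  set g : ℕ → ℝ := fun j => f ((j:ℝ)/((n:ℝ)+2)) with hg
  have hpt : ∀ i ∈ Finset.Icc 1 n,
      ((n:ℝ)+1) * f ((i:ℝ)/((n:ℝ)+1)) ≤ ((n:ℝ)+1-i) * g i + (i:ℝ) * g (i+1) := by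
    intro i hi
    simp only [Finset.mem_Icc] at hi
    have hi1 : (1:ℝ) ≤ i := by exact_mod_cast hi.1
    have hin : (i:ℝ) ≤ n := by exact_mod_cast hi.2
    have ha : (0:ℝ) ≤ ((n:ℝ)+1-i)/((n:ℝ)+1) := by
      apply div_nonneg (by linarith) hn1.le
    have hb : (0:ℝ) ≤ (i:ℝ)/((n:ℝ)+1) := by positivity
    have hab : ((n:ℝ)+1-i)/((n:ℝ)+1) + (i:ℝ)/((n:ℝ)+1) = 1 := by
      field_simp; ring
    have hx : (i:ℝ)/((n:ℝ)+2) ∈ Set.Ici (0:ℝ) := Set.mem_Ici.mpr (by positivity)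
    have hy : ((i:ℝ)+1)/((n:ℝ)+2) ∈ Set.Ici (0:ℝ) := Set.mem_Ici.mpr (by positivity)
    have hcomb : (((n:ℝ)+1-i)/((n:ℝ)+1)) • ((i:ℝ)/((n:ℝ)+2))
        + ((i:ℝ)/((n:ℝ)+1)) • (((i:ℝ)+1)/((n:ℝ)+2)) = (i:ℝ)/((n:ℝ)+1) := by
      simp only [smul_eq_mul]
      field_simp
      try ring
    have := hf.2 hx hy ha hb hab
    rw [hcomb] at this
    simp only [smul_eq_mul] at this
    have h3 : ((i:ℝ)+1) = ((i+1:ℕ):ℝ) := by push_cast; ring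
    have := mul_le_mul_of_nonneg_left this hn1.le
    calc ((n:ℝ)+1) * f ((i:ℝ)/((n:ℝ)+1))
        ≤ ((n:ℝ)+1) * (((n:ℝ)+1-i)/((n:ℝ)+1) * f ((i:ℝ)/((n:ℝ)+2))
            + (i:ℝ)/((n:ℝ)+1) * f (((i:ℝ)+1)/((n:ℝ)+2))) := this
      _ = ((n:ℝ)+1-i) * g i + (i:ℝ) * g (i+1) := by
          rw [hg]; push_cast; field_simp
  calc ((n:ℝ)+1) * ∑ i ∈ Finset.Icc 1 n, f ((i:ℝ)/((n:ℝ)+1))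
      = ∑ i ∈ Finset.Icc 1 n, ((n:ℝ)+1) * f ((i:ℝ)/((n:ℝ)+1)) := by
        rw [Finset.mul_sum]
    _ ≤ ∑ i ∈ Finset.Icc 1 n, (((n:ℝ)+1-i) * g i + (i:ℝ) * g (i+1)) :=
        Finset.sum_le_sum hpt
    _ = ∑ i ∈ range n, (((n:ℝ) - i) * g (1+i) + ((i:ℝ)+1) * g (2+i)) := by
        rw [← Finset.Ico_add_one_right_eq_Icc, Finset.sum_Ico_eq_sum_range]
        refine Finset.sum_congr rfl fun i _ => ?_
        rw [show 1+i+1 = 2+i from by omega]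
        push_cast; ring
    _ = n * ∑ i ∈ range (n+1), g (1+i) := bi_sum_shift n g
    _ = (n:ℝ) * ∑ i ∈ Finset.Icc 1 (n+1), g i := by
        rw [← Finset.Ico_add_one_right_eq_Icc, Finset.sum_Ico_eq_sum_range]
        norm_num
    _ = (n:ℝ) * ∑ i ∈ Finset.Icc 1 (n+1), f ((i:ℝ)/((n:ℝ)+2)) := rfl

theorem bennett_inequality (n : ℕ) (hn : 1 ≤ n) :
    (∀ r : ℝ, 1 < r →
      ((1 / n * ∑ i ∈ Finset.Icc 1 n, (i : ℝ) ^ r) /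
          (1 / (n + 1) * ∑ i ∈ Finset.Icc 1 (n + 1), (i : ℝ) ^ r)) ^ (1 / r) ≤
        ((n : ℝ) + 1) / ((n : ℝ) + 2)) ∧
    (∀ r : ℝ, 0 < r → r < 1 →
      ((1 / n * ∑ i ∈ Finset.Icc 1 n, (i : ℝ) ^ r) /
          (1 / (n + 1) * ∑ i ∈ Finset.Icc 1 (n + 1), (i : ℝ) ^ r)) ^ (1 / r) ≥
        ((n : ℝ) + 1) / ((n : ℝ) + 2)) := by
  have hn0 : (0:ℝ) < n := by exact_mod_cast hn
  have hn1 : (0:ℝ) < (n:ℝ)+1 := by positivity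
  have hn2 : (0:ℝ) < (n:ℝ)+2 := by positivity
  -- positivity of sums
  have hSpos : ∀ (m : ℕ) (r : ℝ), 1 ≤ m → (0:ℝ) < ∑ i ∈ Finset.Icc 1 m, (i:ℝ) ^ r := by
    intro m r hm
    apply Finset.sum_pos
    · intro i hi
      simp only [Finset.mem_Icc] at hi
      have : (0:ℝ) < i := by exact_mod_cast hi.1
      positivity
    · exact ⟨1, by simp [Finset.mem_Icc, hm]⟩
  -- key rewriting: ∑ f(i/(m)) = S(r)/m^r
  have hsum : ∀ (m : ℕ) (c r : ℝ), 0 < c →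
      ∑ i ∈ Finset.Icc 1 m, ((i:ℝ)/c) ^ r = (∑ i ∈ Finset.Icc 1 m, (i:ℝ)^r) / c^r := by
    intro m c r hc
    rw [Finset.sum_div]
    refine Finset.sum_congr rfl fun i hi => ?_
    simp only [Finset.mem_Icc] at hi
    have : (0:ℝ) ≤ i := by positivity
    rw [Real.div_rpow this hc.le]
  constructor
  · intro r hr
    have hr0 : (0:ℝ) < r := by linarith
    have key := bi_key n (convexOn_rpow hr.le)
    rw [hsum n ((n:ℝ)+1) r hn1, hsum (n+1) ((n:ℝ)+2) r hn2] at key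
    push_cast at key
    set Sn := ∑ i ∈ Finset.Icc 1 n, (i:ℝ)^r with hSn
    set Sn1 := ∑ i ∈ Finset.Icc 1 (n+1), (i:ℝ)^r with hSn1
    have hSnpos : 0 < Sn := hSpos n r hn
    have hSn1pos : 0 < Sn1 := hSpos (n+1) r (by omega)
    have hp1 : (0:ℝ) < ((n:ℝ)+1)^r := Real.rpow_pos_of_pos hn1 r
    have hp2 : (0:ℝ) < ((n:ℝ)+2)^r := Real.rpow_pos_of_pos hn2 r
    have key2 : (((n:ℝ)+1)*Sn) * ((n:ℝ)+2)^r ≤ ((n:ℝ)*Sn1) * ((n:ℝ)+1)^r := by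
      have : (((n:ℝ)+1)*Sn)/(((n:ℝ)+1)^r) ≤ ((n:ℝ)*Sn1)/(((n:ℝ)+2)^r) := by
        rw [mul_div_assoc, mul_div_assoc]; exact key
      rwa [div_le_div_iff₀ hp1 hp2] at this
    have hA0 : (0:ℝ) ≤ ((n:ℝ)+1)/((n:ℝ)+2) := by positivity
    have hQ : (1 / n * Sn) / (1 / ((n:ℝ) + 1) * Sn1) ≤ (((n:ℝ)+1)/((n:ℝ)+2)) ^ r := by
      rw [Real.div_rpow hn1.le hn2.le, div_le_div_iff₀ (by positivity) hp2]
      have h := mul_le_mul_of_nonneg_left key2 (le_of_lt (by positivity : (0:ℝ) < 1/((n:ℝ)*((n:ℝ)+1))))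
      have e1 : 1/((n:ℝ)*((n:ℝ)+1)) * ((((n:ℝ)+1)*Sn) * ((n:ℝ)+2)^r) = 1 / n * Sn * ((n:ℝ)+2)^r := by
        field_simp
      have e2 : 1/((n:ℝ)*((n:ℝ)+1)) * (((n:ℝ)*Sn1) * ((n:ℝ)+1)^r) = ((n:ℝ)+1)^r * (1 / ((n:ℝ)+1) * Sn1) := by
        field_simp
      rw [e1, e2] at h
      exact h
    have h0Q : 0 ≤ (1 / n * Sn) / (1 / ((n:ℝ) + 1) * Sn1) := by positivity
    have := Real.rpow_le_rpow h0Q hQ (by positivity : (0:ℝ) ≤ 1/r)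
    rwa [← Real.rpow_mul hA0, mul_one_div, div_self (ne_of_gt hr0), Real.rpow_one] at this
  · intro r hr0 hr1
    have key := bi_key n (Real.concaveOn_rpow hr0.le hr1.le).neg
    simp only [Pi.neg_apply, Finset.sum_neg_distrib, mul_neg, neg_le_neg_iff] at key
    rw [hsum n ((n:ℝ)+1) r hn1, hsum (n+1) ((n:ℝ)+2) r hn2] at key
    push_cast at key
    set Sn := ∑ i ∈ Finset.Icc 1 n, (i:ℝ)^r with hSn
    set Sn1 := ∑ i ∈ Finset.Icc 1 (n+1), (i:ℝ)^r with hSn1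
    have hSnpos : 0 < Sn := hSpos n r hn
    have hSn1pos : 0 < Sn1 := hSpos (n+1) r (by omega)
    have hp1 : (0:ℝ) < ((n:ℝ)+1)^r := Real.rpow_pos_of_pos hn1 r
    have hp2 : (0:ℝ) < ((n:ℝ)+2)^r := Real.rpow_pos_of_pos hn2 r
    -- key : n * (Sn1/(n+2)^r) ≤ (n+1) * (Sn/(n+1)^r)
    have key2 : ((n:ℝ)*Sn1) * ((n:ℝ)+1)^r ≤ (((n:ℝ)+1)*Sn) * ((n:ℝ)+2)^r := by
      have : ((n:ℝ)*Sn1)/(((n:ℝ)+2)^r) ≤ (((n:ℝ)+1)*Sn)/(((n:ℝ)+1)^r) := by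
        rw [mul_div_assoc, mul_div_assoc]; exact key
      rwa [div_le_div_iff₀ hp2 hp1] at this
    have hA0 : (0:ℝ) ≤ ((n:ℝ)+1)/((n:ℝ)+2) := by positivity
    have hQ : (((n:ℝ)+1)/((n:ℝ)+2)) ^ r ≤ (1 / n * Sn) / (1 / ((n:ℝ) + 1) * Sn1) := by
      rw [Real.div_rpow hn1.le hn2.le, div_le_div_iff₀ hp2 (by positivity)]
      have h := mul_le_mul_of_nonneg_left key2 (le_of_lt (by positivity : (0:ℝ) < 1/((n:ℝ)*((n:ℝ)+1))))
      have e1 : 1/((n:ℝ)*((n:ℝ)+1)) * ((((n:ℝ)+1)*Sn) * ((n:ℝ)+2)^r) = 1 / n * Sn * ((n:ℝ)+2)^r := by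
        field_simp
      have e2 : 1/((n:ℝ)*((n:ℝ)+1)) * (((n:ℝ)*Sn1) * ((n:ℝ)+1)^r) = ((n:ℝ)+1)^r * (1 / ((n:ℝ)+1) * Sn1) := by
        field_simp
      rw [e1, e2] at h
      exact h
    have := Real.rpow_le_rpow (by positivity) hQ (by positivity : (0:ℝ) ≤ 1/r)
    rwa [← Real.rpow_mul hA0, mul_one_div, div_self (ne_of_gt hr0), Real.rpow_one] at this
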